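/- limsup_{n→∞} g(n, n-2) / C(2n-5, n-2) ≤ 13/32, where g(n, n-2) = Σ_{i=4}^{n-2} w_i(n, n-2) and the ratio is taken in the real numbers. -/

import Mathlib

/-!
Common definitions: points in the plane, general position, distinct x-coordinates,
cups, caps, convex position, and the combinatorial functions from the paper.
-/

open Finset

/-- A point in the Euclidean plane, with `p.1` its x-coordinate and `p.2` its y-coordinate. -/
abbrev Pt : Type := ℝ × ℝ

/-- A set of points is in general position if no three (distinct) of its points are collinear. -/
def GenPos (S : Set Pt) : Prop :=
  ∀ p ∈ S, ∀ q ∈ S, ∀ r ∈ S, p ≠ q → p ≠ r → q ≠ r → ¬ Collinear ℝ ({p, q, r} : Set Pt)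

/-- A set of points has pairwise distinct x-coordinates. -/
def DistinctX (S : Set Pt) : Prop :=
  ∀ p ∈ S, ∀ q ∈ S, p ≠ q → p.1 ≠ q.1

/-- The slope of the segment from `p` to `q`. -/
noncomputable def PtSlope (p q : Pt) : ℝ := (q.2 - p.2) / (q.1 - p.1)

/-- `f 0, f 1, …, f (k-1)` is a `k`-cup in `P`: the points lie in `P`, are listed in
increasing order of x-coordinate, and the slopes of consecutive segments strictly increase. -/
def IsCupSeq (k : ℕ) (P : Set Pt) (f : ℕ → Pt) : Prop :=
  (∀ i, i < k → f i ∈ P) ∧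
  (∀ i j, i < j → j < k → (f i).1 < (f j).1) ∧
  (∀ i, i + 2 < k → PtSlope (f i) (f (i + 1)) < PtSlope (f (i + 1)) (f (i + 2)))

/-- `f 0, f 1, …, f (k-1)` is a `k`-cap in `P`: the points lie in `P`, are listed in
increasing order of x-coordinate, and the slopes of consecutive segments strictly decrease. -/
def IsCapSeq (k : ℕ) (P : Set Pt) (f : ℕ → Pt) : Prop :=
  (∀ i, i < k → f i ∈ P) ∧
  (∀ i j, i < j → j < k → (f i).1 < (f j).1) ∧
  (∀ i, i + 2 < k → PtSlope (f i) (f (i + 1)) > PtSlope (f (i + 1)) (f (i + 2)))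

/-- `P` contains a `k`-cup. -/
def HasCup (k : ℕ) (P : Set Pt) : Prop := ∃ f : ℕ → Pt, IsCupSeq k P f

/-- `P` contains a `k`-cap. -/
def HasCap (k : ℕ) (P : Set Pt) : Prop := ∃ f : ℕ → Pt, IsCapSeq k P f

/-- `S` is `(n, m)`-free: it contains no `n`-cup and no `m`-cap. -/
def IsFree (n m : ℕ) (S : Set Pt) : Prop := ¬ HasCup n S ∧ ¬ HasCap m S

/-- A set of points is in convex position: every point of the set is a vertex (extreme point)
of its convex hull, i.e. no point lies in the convex hull of the others. -/
def ConvexPos (S : Set Pt) : Prop := ∀ p ∈ S, p ∉ convexHull ℝ (S \ {p})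

/-- `S` contains `n` points in convex position. -/
def HasConvexNGon (n : ℕ) (S : Set Pt) : Prop :=
  ∃ T : Finset Pt, ↑T ⊆ S ∧ T.card = n ∧ ConvexPos ↑T

/-- The set of cardinalities of finite planar point sets, in general position with pairwise
distinct x-coordinates, containing no `n`-cup and no `m`-cap.  The Erdős–Szekeres cup–cap
number `f(n, m)` is the greatest element of this set. -/
def CupCapCards (n m : ℕ) : Set ℕ :=
  {N : ℕ | ∃ S : Finset Pt, S.card = N ∧ GenPos ↑S ∧ DistinctX ↑S ∧
    ¬ HasCup n ↑S ∧ ¬ HasCap m ↑S}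

/-- The defining property of the Erdős–Szekeres number `f(n) = N`: `N` is the smallest
positive integer such that every set of `N` points in general position in the plane
contains `n` points in convex position. -/
def IsESNumber (n N : ℕ) : Prop :=
  IsLeast {N : ℕ | 0 < N ∧
    ∀ S : Finset Pt, GenPos ↑S → S.card = N → HasConvexNGon n ↑S} N

/-- The point `r` lies strictly below the (non-vertical) line through `p` and `q`. -/
noncomputable def StrictlyBelow (p q r : Pt) : Prop :=
  r.2 < p.2 + PtSlope p q * (r.1 - p.1)

/-- The point `s ∈ S` is `(m, l)`-good: for every `n ≥ 4` and every finite set `B` of at most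
`n - 2` points such that `S ∪ B` is in general position with pairwise distinct x-coordinates
and contains an `(n-1)`-cup with leftmost point `s` and rightmost point in `B`, the set
`S ∪ B` contains an `l`-cap whose two rightmost points lie in `S`, or an `m`-cup whose two
leftmost points lie in `S`, or `n` points in convex position. -/
def IsGoodPoint (m l : ℕ) (S : Finset Pt) (s : Pt) : Prop :=
  ∀ n : ℕ, 4 ≤ n → ∀ B : Finset Pt, B.card ≤ n - 2 →
    GenPos ↑(S ∪ B) → DistinctX ↑(S ∪ B) →
    (∃ f : ℕ → Pt, IsCupSeq (n - 1) ↑(S ∪ B) f ∧ f 0 = s ∧ f (n - 2) ∈ B) →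
    ((∃ f : ℕ → Pt, IsCapSeq l ↑(S ∪ B) f ∧ f (l - 2) ∈ S ∧ f (l - 1) ∈ S) ∨
     (∃ f : ℕ → Pt, IsCupSeq m ↑(S ∪ B) f ∧ f 0 ∈ S ∧ f 1 ∈ S) ∨
     HasConvexNGon n ↑(S ∪ B))

/-- The weight functions `wᵢ(m, k)` from the paper. -/
def w (i m k : ℕ) : ℕ :=
  if i = 4 then
    Nat.choose (m + k - 6) (k - 2) + Nat.choose (m + k - 7) (k - 3) +
      2 * Nat.choose (m + k - 8) (k - 4)
  else if k < i then 0
  else (i - 1) * Nat.choose (m + k - i - 4) (k - i)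

/-- `g(m, l) = Σ_{i=4}^{∞} wᵢ(m, l) = Σ_{i=4}^{l} wᵢ(m, l)` (the sum is finite since
`wᵢ(m, l) = 0` for `i > l`). -/
def g (m l : ℕ) : ℕ := ∑ i ∈ Finset.Icc 4 l, w i m l


private lemma hs1 (a : ℕ) : ∀ M : ℕ, ∑ j ∈ Finset.range (M+1), Nat.choose (a+j) j
    = Nat.choose (a+M+1) M := by
  intro M
  induction M with
  | zero => simp
  | succ M ih =>
    rw [Finset.sum_range_succ, ih, show a + (M+1) + 1 = (a + M + 1) + 1 by omega,
      Nat.choose_succ_succ' (a+M+1) M, show a + (M+1) = a + M + 1 by omega]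

private lemma hs2 (a : ℕ) : ∀ M : ℕ, ∑ j ∈ Finset.range (M+2), j * Nat.choose (a+j) j
    = (a+1) * Nat.choose (a+M+2) M := by
  intro M
  induction M with
  | zero =>
    simp [Finset.sum_range_succ]
  | succ M ih =>
    rw [Finset.sum_range_succ, ih, show a + (M+1) + 2 = (a + M + 2) + 1 by omega,
      Nat.choose_succ_succ' (a+M+2) M, show a + (M+2) = a + M + 2 by omega]
    have h2 : Nat.choose (a+M+2) (M+2) * (M+2) = Nat.choose (a+M+2) (M+1) * (a+1) := by
      have := Nat.choose_succ_right_eq (a+M+2) (M+1)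
      rwa [show a + M + 2 - (M+1) = a + 1 by omega] at this
    nlinarith [h2]

private lemma pascal5 (N K : ℕ) : (N+5).choose (K+5) = N.choose K + 5 * N.choose (K+1)
    + 10 * N.choose (K+2) + 10 * N.choose (K+3) + 5 * N.choose (K+4) + N.choose (K+5) := by
  have h := Nat.add_choose_eq 5 N (K+5)
  rw [show (5:ℕ) + N = N + 5 by omega] at h
  rw [h, Finset.Nat.sum_antidiagonal_eq_sum_range_succ_mk]
  have hz : ∀ i ∈ Finset.range (K+5+1), i ∉ Finset.range 6 →
      Nat.choose 5 i * N.choose (K+5-i) = 0 := by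
    intro i _ hi2
    have : 5 < i := by simpa using Finset.mem_range.not.mp hi2 |> fun h => by omega
    rw [Nat.choose_eq_zero_of_lt this, zero_mul]
  rw [← Finset.sum_subset (Finset.range_subset_range.mpr (by omega)) hz]
  rw [Finset.sum_range_succ, Finset.sum_range_succ, Finset.sum_range_succ,
    Finset.sum_range_succ, Finset.sum_range_succ, Finset.sum_range_succ,
    Finset.sum_range_zero]
  rw [show K+5-1 = K+4 by omega, show K+5-2 = K+3 by omega, show K+5-3 = K+2 by omega,
    show K+5-4 = K+1 by omega, show K+5-5 = K by omega]
  norm_num [Nat.choose]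
  ring

private lemma wtail (m t : ℕ) (ht : t ≤ m + 5) :
    w (5+t) (m+12) (m+10) = (4+t) * Nat.choose (2*m+13-t) (m+5-t) := by
  have h4 : ¬ (5 + t = 4) := by omega
  have hk : ¬ (m + 10 < 5 + t) := by omega
  simp only [w, if_neg h4, if_neg hk]
  rw [show 5 + t - 1 = 4 + t by omega, show m + 12 + (m+10) - (5+t) - 4 = 2*m+13-t by omega,
    show m + 10 - (5+t) = m+5-t by omega]

private lemma w4val (m : ℕ) : w 4 (m+12) (m+10)
    = 5 * Nat.choose (2*m+14) (m+6) + 3 * Nat.choose (2*m+14) (m+7) := by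
  have hw : w 4 (m+12) (m+10) = Nat.choose (m+12+(m+10)-6) (m+10-2)
      + Nat.choose (m+12+(m+10)-7) (m+10-3) + 2 * Nat.choose (m+12+(m+10)-8) (m+10-4) := by
    simp [w]
  rw [hw]
  rw [show m + 12 + (m+10) - 6 = (2*m+15)+1 by omega,
    show m + 12 + (m+10) - 7 = (2*m+14)+1 by omega,
    show m + 12 + (m+10) - 8 = 2*m+14 by omega,
    show m + 10 - 2 = (m+7)+1 by omega, show m + 10 - 3 = (m+6)+1 by omega,
    show m + 10 - 4 = m+6 by omega, Nat.choose_succ_succ' (2*m+15) (m+7),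
    show (2*m+15 : ℕ) = (2*m+14)+1 by omega, Nat.choose_succ_succ' (2*m+14) (m+6),
    show ((m+7:ℕ))+1 = (m+7)+1 by omega, Nat.choose_succ_succ' (2*m+14) (m+7)]
  have s1 : Nat.choose (2*m+14) (m+7+1) = Nat.choose (2*m+14) (m+6) := by
    have := Nat.choose_symm (show m+8 ≤ 2*m+14 by omega)
    rw [show 2*m+14 - (m+8) = m+6 by omega] at this
    rw [show m+7+1 = m+8 by omega, ← this]
  rw [s1]
  ring

private lemma gkey (m : ℕ) : g (m+12) (m+10) + (m+9) * Nat.choose (2*m+14) (m+4)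
    = 5 * Nat.choose (2*m+14) (m+6) + 3 * Nat.choose (2*m+14) (m+7)
      + (m+9) * Nat.choose (2*m+14) (m+5) := by
  have hIcc : Finset.Icc 4 (m+10) = Finset.Ico 4 (m+11) := by
    rw [← Finset.Ico_add_one_right_eq_Icc]; rfl
  have hg : g (m+12) (m+10) = ∑ t ∈ Finset.range (m+7), w (4+t) (m+12) (m+10) := by
    rw [g, hIcc, Finset.sum_Ico_eq_sum_range]
    rw [show m+11-4 = m+7 by omega]
  have hsplit : ∑ t ∈ Finset.range (m+7), w (4+t) (m+12) (m+10)
      = (∑ t ∈ Finset.range (m+6), w (5+t) (m+12) (m+10)) + w 4 (m+12) (m+10) := by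
    rw [Finset.sum_range_succ']
    have : ∀ t, w (4+(t+1)) (m+12) (m+10) = w (5+t) (m+12) (m+10) := by
      intro t; rw [show 4+(t+1) = 5+t by omega]
    simp only [this, Nat.add_zero]
  have htail1 : ∑ t ∈ Finset.range (m+6), w (5+t) (m+12) (m+10)
      = ∑ t ∈ Finset.range (m+6), (4+t) * Nat.choose (2*m+13-t) (m+5-t) := by
    apply Finset.sum_congr rfl
    intro t ht
    exact wtail m t (by have := Finset.mem_range.mp ht; omega)
  have hrefl : ∑ t ∈ Finset.range (m+6), (4+t) * Nat.choose (2*m+13-t) (m+5-t)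
      = ∑ j ∈ Finset.range (m+6), (m+9-j) * Nat.choose (m+8+j) j := by
    rw [← Finset.sum_range_reflect (fun t => (4+t) * Nat.choose (2*m+13-t) (m+5-t)) (m+6)]
    apply Finset.sum_congr rfl
    intro j hj
    have hj' : j ≤ m + 5 := by have := Finset.mem_range.mp hj; omega
    rw [show 4+(m+6-1-j) = m+9-j by omega, show 2*m+13-(m+6-1-j) = m+8+j by omega,
      show m+5-(m+6-1-j) = j by omega]
  have hsum : (∑ j ∈ Finset.range (m+6), (m+9-j) * Nat.choose (m+8+j) j)
      + (∑ j ∈ Finset.range (m+6), j * Nat.choose (m+8+j) j)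
      = (m+9) * Nat.choose (2*m+14) (m+5) := by
    rw [← Finset.sum_add_distrib]
    have step : ∑ j ∈ Finset.range (m+6), ((m+9-j) * Nat.choose (m+8+j) j + j * Nat.choose (m+8+j) j)
        = ∑ j ∈ Finset.range (m+6), (m+9) * Nat.choose (m+8+j) j := by
      apply Finset.sum_congr rfl
      intro j hj
      have hj' : j ≤ m + 5 := by have := Finset.mem_range.mp hj; omega
      rw [← Nat.add_mul, show m+9-j+j = m+9 by omega]
    rw [step, ← Finset.mul_sum]
    have := hs1 (m+8) (m+5)
    rw [show m+8+(m+5)+1 = 2*m+14 by omega] at this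
    rw [this]
  have hs2' : ∑ j ∈ Finset.range (m+6), j * Nat.choose (m+8+j) j
      = (m+9) * Nat.choose (2*m+14) (m+4) := by
    have := hs2 (m+8) (m+4)
    rwa [show m+8+(m+4)+2 = 2*m+14 by omega, show m+4+2 = m+6 by omega,
      show m+8+1 = m+9 by omega] at this
  rw [hg, hsplit, htail1, hrefl, w4val]
  omega

private lemma Dval (m : ℕ) : Nat.choose (2*m+19) (m+10)
    = Nat.choose (2*m+14) (m+4) + 6 * Nat.choose (2*m+14) (m+5)
      + 15 * Nat.choose (2*m+14) (m+6) + 10 * Nat.choose (2*m+14) (m+7) := by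
  have h := pascal5 (2*m+14) (m+5)
  rw [show 2*m+14+5 = 2*m+19 by ring, show m+5+5 = m+10 by ring,
    show m+5+1 = m+6 by ring, show m+5+2 = m+7 by ring, show m+5+3 = m+8 by ring,
    show m+5+4 = m+9 by ring] at h
  have s8 : Nat.choose (2*m+14) (m+8) = Nat.choose (2*m+14) (m+6) := by
    have := Nat.choose_symm (show m+8 ≤ 2*m+14 by omega)
    rw [show 2*m+14 - (m+8) = m+6 by omega] at this
    exact this.symm
  have s9 : Nat.choose (2*m+14) (m+9) = Nat.choose (2*m+14) (m+5) := by
    have := Nat.choose_symm (show m+9 ≤ 2*m+14 by omega)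
    rw [show 2*m+14 - (m+9) = m+5 by omega] at this
    exact this.symm
  have s10 : Nat.choose (2*m+14) (m+10) = Nat.choose (2*m+14) (m+4) := by
    have := Nat.choose_symm (show m+10 ≤ 2*m+14 by omega)
    rw [show 2*m+14 - (m+10) = m+4 by omega] at this
    exact this.symm
  rw [s8, s9, s10] at h
  omega

set_option maxHeartbeats 1000000 in
private lemma key_ineq (m : ℕ) :
    32 * g (m+12) (m+10) ≤ 13 * Nat.choose (2*m+19) (m+10) := by
  have r1 : Nat.choose (2*m+14) (m+5) * (m+5) = Nat.choose (2*m+14) (m+4) * (m+10) := by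
    have := Nat.choose_succ_right_eq (2*m+14) (m+4)
    rwa [show m+4+1 = m+5 by omega, show 2*m+14 - (m+4) = m+10 by omega] at this
  have r2 : Nat.choose (2*m+14) (m+6) * (m+6) = Nat.choose (2*m+14) (m+5) * (m+9) := by
    have := Nat.choose_succ_right_eq (2*m+14) (m+5)
    rwa [show m+5+1 = m+6 by omega, show 2*m+14 - (m+5) = m+9 by omega] at this
  have r3 : Nat.choose (2*m+14) (m+7) * (m+7) = Nat.choose (2*m+14) (m+6) * (m+8) := by
    have := Nat.choose_succ_right_eq (2*m+14) (m+6)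
    rwa [show m+6+1 = m+7 by omega, show 2*m+14 - (m+6) = m+8 by omega] at this
  have e5 : (m+5)*(m+6)*(m+7)*(Nat.choose (2*m+14) (m+5))
      = (m+6)*(m+7)*(m+10)*(Nat.choose (2*m+14) (m+4)) := by
    calc (m+5)*(m+6)*(m+7)*(Nat.choose (2*m+14) (m+5))
        = (m+6)*(m+7)*(Nat.choose (2*m+14) (m+5)*(m+5)) := by ring
      _ = (m+6)*(m+7)*(Nat.choose (2*m+14) (m+4)*(m+10)) := by rw [r1]
      _ = (m+6)*(m+7)*(m+10)*(Nat.choose (2*m+14) (m+4)) := by ring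
  have e6 : (m+5)*(m+6)*(m+7)*(Nat.choose (2*m+14) (m+6))
      = (m+7)*(m+9)*(m+10)*(Nat.choose (2*m+14) (m+4)) := by
    calc (m+5)*(m+6)*(m+7)*(Nat.choose (2*m+14) (m+6))
        = (m+5)*(m+7)*(Nat.choose (2*m+14) (m+6)*(m+6)) := by ring
      _ = (m+5)*(m+7)*(Nat.choose (2*m+14) (m+5)*(m+9)) := by rw [r2]
      _ = (m+7)*(m+9)*(Nat.choose (2*m+14) (m+5)*(m+5)) := by ring
      _ = (m+7)*(m+9)*(Nat.choose (2*m+14) (m+4)*(m+10)) := by rw [r1]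
      _ = (m+7)*(m+9)*(m+10)*(Nat.choose (2*m+14) (m+4)) := by ring
  have e7 : (m+5)*(m+6)*(m+7)*(Nat.choose (2*m+14) (m+7))
      = (m+8)*(m+9)*(m+10)*(Nat.choose (2*m+14) (m+4)) := by
    calc (m+5)*(m+6)*(m+7)*(Nat.choose (2*m+14) (m+7))
        = (m+5)*(m+6)*(Nat.choose (2*m+14) (m+7)*(m+7)) := by ring
      _ = (m+5)*(m+6)*(Nat.choose (2*m+14) (m+6)*(m+8)) := by rw [r3]
      _ = (m+5)*(m+8)*(Nat.choose (2*m+14) (m+6)*(m+6)) := by ring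
      _ = (m+5)*(m+8)*(Nat.choose (2*m+14) (m+5)*(m+9)) := by rw [r2]
      _ = (m+8)*(m+9)*(Nat.choose (2*m+14) (m+5)*(m+5)) := by ring
      _ = (m+8)*(m+9)*(Nat.choose (2*m+14) (m+4)*(m+10)) := by rw [r1]
      _ = (m+8)*(m+9)*(m+10)*(Nat.choose (2*m+14) (m+4)) := by ring
  have main : 160*(Nat.choose (2*m+14) (m+6)) + 96*(Nat.choose (2*m+14) (m+7))
        + 32*((m+9)*(Nat.choose (2*m+14) (m+5)))
      ≤ 13*(Nat.choose (2*m+14) (m+4)) + 78*(Nat.choose (2*m+14) (m+5))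
        + 195*(Nat.choose (2*m+14) (m+6)) + 130*(Nat.choose (2*m+14) (m+7))
        + 32*((m+9)*(Nat.choose (2*m+14) (m+4))) := by
    have hK : 0 < (m+5)*(m+6)*(m+7) :=
      Nat.mul_pos (Nat.mul_pos (Nat.succ_pos _) (Nat.succ_pos _)) (Nat.succ_pos _)
    have lhs_eq : (m+5)*(m+6)*(m+7) * (160*(Nat.choose (2*m+14) (m+6))
          + 96*(Nat.choose (2*m+14) (m+7)) + 32*((m+9)*(Nat.choose (2*m+14) (m+5))))
        = (160*((m+7)*(m+9)*(m+10)) + 96*((m+8)*(m+9)*(m+10))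
            + 32*(m+9)*((m+6)*(m+7)*(m+10))) * (Nat.choose (2*m+14) (m+4)) := by
      have h : (m+5)*(m+6)*(m+7) * (160*(Nat.choose (2*m+14) (m+6))
            + 96*(Nat.choose (2*m+14) (m+7)) + 32*((m+9)*(Nat.choose (2*m+14) (m+5))))
          = 160*((m+5)*(m+6)*(m+7)*(Nat.choose (2*m+14) (m+6)))
            + 96*((m+5)*(m+6)*(m+7)*(Nat.choose (2*m+14) (m+7)))
            + 32*(m+9)*((m+5)*(m+6)*(m+7)*(Nat.choose (2*m+14) (m+5))) := by ring
      rw [h, e5, e6, e7]; ring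
    have rhs_eq : (m+5)*(m+6)*(m+7) * (13*(Nat.choose (2*m+14) (m+4))
          + 78*(Nat.choose (2*m+14) (m+5)) + 195*(Nat.choose (2*m+14) (m+6))
          + 130*(Nat.choose (2*m+14) (m+7)) + 32*((m+9)*(Nat.choose (2*m+14) (m+4))))
        = (13*((m+5)*(m+6)*(m+7)) + 78*((m+6)*(m+7)*(m+10)) + 195*((m+7)*(m+9)*(m+10))
            + 130*((m+8)*(m+9)*(m+10)) + 32*(m+9)*((m+5)*(m+6)*(m+7)))
            * (Nat.choose (2*m+14) (m+4)) := by
      have h : (m+5)*(m+6)*(m+7) * (13*(Nat.choose (2*m+14) (m+4))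
            + 78*(Nat.choose (2*m+14) (m+5)) + 195*(Nat.choose (2*m+14) (m+6))
            + 130*(Nat.choose (2*m+14) (m+7)) + 32*((m+9)*(Nat.choose (2*m+14) (m+4))))
          = 13*((m+5)*(m+6)*(m+7))*(Nat.choose (2*m+14) (m+4))
            + 78*((m+5)*(m+6)*(m+7)*(Nat.choose (2*m+14) (m+5)))
            + 195*((m+5)*(m+6)*(m+7)*(Nat.choose (2*m+14) (m+6)))
            + 130*((m+5)*(m+6)*(m+7)*(Nat.choose (2*m+14) (m+7)))
            + 32*(m+9)*((m+5)*(m+6)*(m+7))*(Nat.choose (2*m+14) (m+4)) := by ring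
      rw [h, e5, e6, e7]; ring
    have hpoly : (160*((m+7)*(m+9)*(m+10)) + 96*((m+8)*(m+9)*(m+10))
          + 32*(m+9)*((m+6)*(m+7)*(m+10))) + (336*m*m+5400*m+21540)
        = 13*((m+5)*(m+6)*(m+7)) + 78*((m+6)*(m+7)*(m+10)) + 195*((m+7)*(m+9)*(m+10))
          + 130*((m+8)*(m+9)*(m+10)) + 32*(m+9)*((m+5)*(m+6)*(m+7)) := by ring
    have hmul : (m+5)*(m+6)*(m+7) * (160*(Nat.choose (2*m+14) (m+6))
          + 96*(Nat.choose (2*m+14) (m+7)) + 32*((m+9)*(Nat.choose (2*m+14) (m+5))))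
        ≤ (m+5)*(m+6)*(m+7) * (13*(Nat.choose (2*m+14) (m+4))
          + 78*(Nat.choose (2*m+14) (m+5)) + 195*(Nat.choose (2*m+14) (m+6))
          + 130*(Nat.choose (2*m+14) (m+7)) + 32*((m+9)*(Nat.choose (2*m+14) (m+4)))) := by
      rw [lhs_eq, rhs_eq]
      exact Nat.mul_le_mul_right _ (by omega)
    exact Nat.le_of_mul_le_mul_left hmul hK
  have hG := gkey m
  have hD := Dval m
  omega

/-- `limsup_{n → ∞} g(n, n-2) / C(2n-5, n-2) ≤ 13/32`, the ratio being
taken in the real numbers. -/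
theorem stmt_16 :
    Filter.limsup (fun n : ℕ => (g n (n - 2) : ℝ) / (Nat.choose (2 * n - 5) (n - 2) : ℝ))
      Filter.atTop ≤ 13 / 32 := by
  have key : ∀ᶠ n : ℕ in Filter.atTop,
      (g n (n - 2) : ℝ) / (Nat.choose (2 * n - 5) (n - 2) : ℝ) ≤ 13 / 32 := by
    filter_upwards [Filter.eventually_ge_atTop 12] with n hn
    obtain ⟨m, rfl⟩ : ∃ m, n = m + 12 := ⟨n - 12, by omega⟩
    have h1 : (m+12) - 2 = m+10 := by omega
    have h2 : 2*(m+12) - 5 = 2*m+19 := by omega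
    rw [h1, h2]
    have hDpos : 0 < Nat.choose (2*m+19) (m+10) := Nat.choose_pos (by omega)
    have hD : (0:ℝ) < (Nat.choose (2*m+19) (m+10) : ℝ) := by exact_mod_cast hDpos
    rw [div_le_iff₀ hD]
    have := key_ineq m
    have h32 : (32 : ℝ) * (g (m+12) (m+10) : ℝ) ≤ 13 * (Nat.choose (2*m+19) (m+10) : ℝ) := by
      exact_mod_cast this
    linarith
  exact Filter.limsup_le_of_le
    (Filter.isCoboundedUnder_le_of_le Filter.atTop (fun n => by positivity)) key
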